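/- Let λ be the rectangular Young diagram with k rows and m columns (k, m ≥ 1), and set θ = π/(2(k+m)). Then the product over all cells c of λ of cot(h(c)·θ) equals 1. -/

import Mathlib

open Real

/-- The rectangular Young diagram with `k` rows and `m` columns (0-indexed cells). -/
def rectYoung (k m : ℕ) : YoungDiagram where
  cells := Finset.range k ×ˢ Finset.range m
  isLowerSet := by
    intro a b hba ha
    simp only [Finset.coe_product, Finset.coe_range, Set.mem_prod, Set.mem_Iio] at *
    exact ⟨lt_of_le_of_lt hba.1 ha.1, lt_of_le_of_lt hba.2 ha.2⟩

/-- The hook length of the cell `(i, j)` in a Young diagram `μ`. -/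
def hookLength (μ : YoungDiagram) (i j : ℕ) : ℕ :=
  (μ.rowLen i - j) + (μ.colLen j - i) - 1

lemma mem_rect {k m i j : ℕ} : (i, j) ∈ rectYoung k m ↔ i < k ∧ j < m := by
  change (i, j) ∈ Finset.range k ×ˢ Finset.range m ↔ _
  simp [Finset.mem_product]

lemma rowLen_rect {k m i : ℕ} (hm : 1 ≤ m) (hi : i < k) :
    (rectYoung k m).rowLen i = m := by
  refine le_antisymm ?_ ?_
  · by_contra h
    have : (i, m) ∈ rectYoung k m := YoungDiagram.mem_iff_lt_rowLen.mpr (lt_of_not_ge h)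
    exact absurd (mem_rect.mp this).2 (lt_irrefl m)
  · have : (i, m - 1) ∈ rectYoung k m := mem_rect.mpr ⟨hi, by omega⟩
    have := YoungDiagram.mem_iff_lt_rowLen.mp this
    omega

lemma colLen_rect {k m j : ℕ} (hk : 1 ≤ k) (hj : j < m) :
    (rectYoung k m).colLen j = k := by
  refine le_antisymm ?_ ?_
  · by_contra h
    have : (k, j) ∈ rectYoung k m := YoungDiagram.mem_iff_lt_colLen.mpr (lt_of_not_ge h)
    exact absurd (mem_rect.mp this).1 (lt_irrefl k)
  · have : (k - 1, j) ∈ rectYoung k m := mem_rect.mpr ⟨by omega, hj⟩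
    have := YoungDiagram.mem_iff_lt_colLen.mp this
    omega

lemma hook_rect {k m i j : ℕ} (hi : i < k) (hj : j < m) :
    hookLength (rectYoung k m) i j = k + m - 1 - i - j := by
  unfold hookLength
  rw [rowLen_rect (by omega) hi, colLen_rect (by omega) hj]
  omega

lemma cot_mul_cot_pi_div_two_sub {x : ℝ} (h0 : 0 < x) (h1 : x < π / 2) :
    Real.cot x * Real.cot (π / 2 - x) = 1 := by
  have hs : Real.sin x ≠ 0 := ne_of_gt (Real.sin_pos_of_pos_of_lt_pi h0 (by linarith [Real.pi_pos]))
  have hc : Real.cos x ≠ 0 := ne_of_gt (Real.cos_pos_of_mem_Ioo ⟨by linarith [Real.pi_pos], h1⟩)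
  rw [Real.cot_eq_cos_div_sin, Real.cot_eq_cos_div_sin, Real.cos_pi_div_two_sub,
    Real.sin_pi_div_two_sub]
  field_simp

lemma cot_pi_div_four : Real.cot (π / 4) = 1 := by
  rw [Real.cot_eq_cos_div_sin, Real.cos_pi_div_four, Real.sin_pi_div_four]
  rw [div_self]
  positivity

/-- For the `k × m` rectangular Young diagram and `θ = π / (2 (k + m))`, the product of
`cot (h(c) θ)` over all cells `c` equals `1`. -/
theorem rect_prod_cot_hookLength_eq_one (k m : ℕ) (hk : 1 ≤ k) (hm : 1 ≤ m) :
    ∏ c ∈ (rectYoung k m).cells,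
      Real.cot ((hookLength (rectYoung k m) c.1 c.2 : ℝ) * (π / (2 * (k + m)))) = 1 := by
  have hN : (0:ℝ) < (k:ℝ) + m := by positivity
  have hpi := Real.pi_pos
  have hhalf : ((k:ℝ) + m) * (π / (2 * ((k:ℝ) + m))) = π / 2 := by
    field_simp
  have hmemc : ∀ c : ℕ × ℕ, c ∈ (rectYoung k m).cells → c.1 < k ∧ c.2 < m := by
    intro c hc
    exact mem_rect.mp (by exact hc)
  have key : ∀ h : ℕ, 1 ≤ h → h < k + m →
      0 < (h : ℝ) * (π / (2 * (k + m))) ∧ (h : ℝ) * (π / (2 * (k + m))) < π / 2 := by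
    intro h h1 h2
    constructor
    · have : (0:ℝ) < (h:ℝ) := by exact_mod_cast h1
      positivity
    · have hcast : (h:ℝ) < (k:ℝ) + m := by exact_mod_cast h2
      calc (h:ℝ) * (π / (2 * ((k:ℝ) + m))) < ((k:ℝ) + m) * (π / (2 * ((k:ℝ) + m))) :=
            mul_lt_mul_of_pos_right hcast (by positivity)
        _ = π / 2 := hhalf
  refine Finset.prod_involution (fun c _ => (k - 1 - c.1, m - 1 - c.2)) ?_ ?_ ?_ ?_
  · intro c hc
    obtain ⟨hi, hj⟩ := hmemc c hc
    simp only
    rw [hook_rect hi hj, hook_rect (by omega) (by omega)]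
    set h₁ := k + m - 1 - c.1 - c.2 with hh1
    have hh2 : k + m - 1 - (k - 1 - c.1) - (m - 1 - c.2) = c.1 + c.2 + 1 := by omega
    rw [hh2]
    have hsum : h₁ + (c.1 + c.2 + 1) = k + m := by omega
    have hθ2 : ((c.1 + c.2 + 1 : ℕ) : ℝ) * (π / (2 * (k + m)))
        = π / 2 - (h₁ : ℝ) * (π / (2 * (k + m))) := by
      have hcast : ((h₁ : ℝ) + ((c.1 + c.2 + 1 : ℕ) : ℝ)) = (k:ℝ) + m := by
        push_cast
        exact_mod_cast congrArg (Nat.cast : ℕ → ℝ) hsum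
      linear_combination (π / (2 * ((k:ℝ) + m))) * hcast + hhalf
    rw [hθ2]
    exact cot_mul_cot_pi_div_two_sub (key h₁ (by omega) (by omega)).1 (key h₁ (by omega) (by omega)).2
  · intro c hc hne
    obtain ⟨hi, hj⟩ := hmemc c hc
    intro heq
    apply hne
    have h1 : k - 1 - c.1 = c.1 := congrArg Prod.fst heq
    have h2 : m - 1 - c.2 = c.2 := congrArg Prod.snd heq
    rw [hook_rect hi hj]
    have hh : 2 * (k + m - 1 - c.1 - c.2) = k + m := by omega
    have : ((k + m - 1 - c.1 - c.2 : ℕ) : ℝ) * (π / (2 * (k + m))) = π / 4 := by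
      have hcast : 2 * ((k + m - 1 - c.1 - c.2 : ℕ) : ℝ) = (k:ℝ) + m := by
        exact_mod_cast congrArg (Nat.cast : ℕ → ℝ) hh
      linear_combination (π / (2 * ((k:ℝ) + m)) / 2) * hcast + hhalf / 2
    rw [this]
    exact cot_pi_div_four
  · intro c hc
    obtain ⟨hi, hj⟩ := hmemc c hc
    exact mem_rect.mpr ⟨by omega, by omega⟩
  · intro c hc
    obtain ⟨hi, hj⟩ := hmemc c hc
    simp only
    ext <;> simp <;> omega
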